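/- Let k > r ≥ 2 be integers with r prime. If ℓ_{k,r} = 0 (that is, gcd(k, #r) = r), then w_2(k;r) = rk − r + 1. -/

import Mathlib

/-- `vdwProp r k n` says: every coloring `χ` of `{1,...,n}` with colors `0,...,r-1`
admits, for some color `i < r`, a `k i`-term arithmetic progression
`a, a+d, ..., a+(k i - 1)d` (with `a ≥ 1`, `d ≥ 1`) contained in `{1,...,n}`,
all of whose elements have color `i`. -/
def vdwProp (r : ℕ) (k : ℕ → ℕ) (n : ℕ) : Prop :=
  ∀ χ : ℕ → ℕ, (∀ x, 1 ≤ x → x ≤ n → χ x < r) →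
    ∃ i < r, ∃ a, 1 ≤ a ∧ ∃ d, 1 ≤ d ∧ a + (k i - 1) * d ≤ n ∧
      ∀ t < k i, χ (a + t * d) = i

/-- The length function for `w₂(k;r) = w(k,2,2,...,2;r)`: color `0` must avoid
`k`-term APs, every other color must avoid `2`-term APs. -/
def twoColors (k : ℕ) : ℕ → ℕ := fun i => if i = 0 then k else 2

/-- `#r`: the product of all primes not exceeding `r`. -/
def primorialUpTo (r : ℕ) : ℕ := ∏ p ∈ Finset.filter Nat.Prime (Finset.range (r + 1)), p

/-- `j_{k,r} = min { j ≥ 0 : gcd(k - j, #r) = 1 }`. -/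
noncomputable def jkr (k r : ℕ) : ℕ := sInf {j : ℕ | Nat.gcd (k - j) (primorialUpTo r) = 1}

/-- `ℓ_{k,r} = min { ℓ ≥ 0 : gcd(k - ℓ, #r) = r }`. -/
noncomputable def lkr (k r : ℕ) : ℕ := sInf {l : ℕ | Nat.gcd (k - l) (primorialUpTo r) = r}

lemma coverLemma (k : ℕ) (hk : 1 ≤ k) :
    ∀ L : ℕ, ∀ S : Finset ℕ, ∀ u : ℕ,
      (∀ x ∈ S, u < x ∧ x ≤ u + L) →
      (∀ a, u < a → a + (k - 1) ≤ u + L → ∃ s ∈ S, a ≤ s ∧ s ≤ a + (k - 1)) →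
      L ≤ S.card * k + (k - 1) := by
  intro L
  induction L using Nat.strong_induction_on with
  | _ L ih =>
    intro S u hS hcov
    by_cases hL : L ≤ k - 1
    · omega
    · obtain ⟨s, hsS, hs1, hs2⟩ := hcov (u + 1) (by omega) (by omega)
      have hsu : u < s ∧ s ≤ u + L := hS s hsS
      have key := ih (u + L - s) (by omega) (S.filter (fun x => s < x)) s
        (fun x hx => by
          simp only [Finset.mem_filter] at hx
          have := hS x hx.1
          exact ⟨hx.2, by omega⟩)
        (fun a ha hale => by
          obtain ⟨x, hxS, hx1, hx2⟩ := hcov a (by omega) (by omega)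
          exact ⟨x, Finset.mem_filter.mpr ⟨hxS, by omega⟩, hx1, hx2⟩)
      have hcard : (S.filter (fun x => s < x)).card < S.card := by
        apply Finset.card_lt_card
        refine Finset.filter_ssubset.mpr ⟨s, hsS, by simp⟩
      have h2 : ((S.filter (fun x => s < x)).card + 1) * k
          = (S.filter (fun x => s < x)).card * k + k := by ring
      have h1 : ((S.filter (fun x => s < x)).card + 1) * k ≤ S.card * k :=
        Nat.mul_le_mul_right _ (by omega)
      omega

/-- Part II(ii): if `r` is prime and `ℓ_{k,r} = 0` (i.e. `gcd(k, #r) = r`),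
then `w₂(k;r) = rk - r + 1`. -/
theorem w2_eq_of_l_eq_zero (k r : ℕ) (hr : 2 ≤ r) (hk : r < k)
    (hrp : r.Prime) (hl : lkr k r = 0) :
    IsLeast {n : ℕ | 0 < n ∧ vdwProp r (twoColors k) n} (r * k - r + 1) := by
  -- Basic gcd facts
  have hrprim : r ∣ primorialUpTo r :=
    Finset.dvd_prod_of_mem _ (by
      simp only [Finset.mem_filter, Finset.mem_range]
      exact ⟨by omega, hrp⟩)
  have hgcd : Nat.gcd k (primorialUpTo r) = r := by
    have hne : {l : ℕ | Nat.gcd (k - l) (primorialUpTo r) = r}.Nonempty := by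
      refine ⟨k - r, ?_⟩
      have h : k - (k - r) = r := by omega
      simp only [Set.mem_setOf_eq, h]
      exact Nat.gcd_eq_left hrprim
    have := Nat.sInf_mem hne
    rw [lkr] at hl
    rw [hl] at this
    simpa using this
  have hrk : r ∣ k := by
    have := Nat.gcd_dvd_left k (primorialUpTo r)
    rwa [hgcd] at this
  obtain ⟨c, hc⟩ := hrk
  have hc1 : 1 ≤ c := by
    rcases Nat.eq_zero_or_pos c with h | h
    · subst h; omega
    · exact h
  -- coprimality of small d with k
  have hcop : ∀ d, 1 ≤ d → d < r → Nat.Coprime d k := by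
    intro d hd1 hdr
    rw [Nat.coprime_iff_gcd_eq_one]
    by_contra hne1
    have hgpos : 0 < Nat.gcd d k := Nat.gcd_pos_of_pos_left k hd1
    have hp : (Nat.gcd d k).minFac.Prime := Nat.minFac_prime (by omega)
    have hpd : (Nat.gcd d k).minFac ∣ d := (Nat.minFac_dvd _).trans (Nat.gcd_dvd_left _ _)
    have hpk : (Nat.gcd d k).minFac ∣ k := (Nat.minFac_dvd _).trans (Nat.gcd_dvd_right _ _)
    have hpled : (Nat.gcd d k).minFac ≤ d := Nat.le_of_dvd (by omega) hpd
    have hpprim : (Nat.gcd d k).minFac ∣ primorialUpTo r :=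
      Finset.dvd_prod_of_mem _ (by
        simp only [Finset.mem_filter, Finset.mem_range]
        exact ⟨by omega, hp⟩)
    have hpr : (Nat.gcd d k).minFac ∣ r := by
      have := Nat.dvd_gcd hpk hpprim
      rwa [hgcd] at this
    rcases (Nat.Prime.eq_one_or_self_of_dvd hrp _ hpr) with h | h
    · exact hp.one_lt.ne' h
    · omega
  -- hitting multiples of k with APs of small difference
  have hhit : ∀ a d : ℕ, 1 ≤ a → 1 ≤ d → d < r → ∃ t < k, k ∣ a + t * d := by
    intro a d ha hd hdr
    haveI : NeZero k := ⟨by omega⟩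
    have hco : Nat.Coprime d k := hcop d hd hdr
    set u : (ZMod k)ˣ := ZMod.unitOfCoprime d hco with hu
    set z : ZMod k := (-(a : ZMod k)) * ↑u⁻¹ with hz
    refine ⟨z.val, ZMod.val_lt z, ?_⟩
    have hzero : ((a + z.val * d : ℕ) : ZMod k) = 0 := by
      push_cast
      rw [ZMod.natCast_rightInverse z]
      have hdu : (d : ZMod k) = ↑u := (ZMod.coe_unitOfCoprime d hco).symm
      rw [hdu, hz, mul_assoc, Units.inv_mul]
      ring
    exact (ZMod.natCast_eq_zero_iff _ _).mp hzero
  have hrk1 : r * k = r * (k - 1) + r := by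
    have e : r * ((k - 1) + 1) = r * (k - 1) + r := by ring
    have e2 : (k - 1) + 1 = k := by omega
    rw [e2] at e
    exact e
  have hNeq : r * k - r + 1 = r * (k - 1) + 1 := by omega
  constructor
  · refine ⟨by omega, ?_⟩
    -- upper bound: vdwProp holds at N = r*k - r + 1
    intro χ hχ
    by_contra hno
    push_neg at hno
    set N := r * k - r + 1 with hNdef
    set S := (Finset.Icc 1 N).filter (fun x => χ x ≠ 0) with hSdef
    -- every k-window contains an element of S
    have hwin : ∀ a, 1 ≤ a → a + (k - 1) ≤ N → ∃ s ∈ S, a ≤ s ∧ s ≤ a + (k - 1) := by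
      intro a ha hale
      have htc0 : twoColors k 0 = k := rfl
      have := hno 0 (by omega) a ha 1 le_rfl (by rw [htc0]; omega)
      rw [htc0] at this
      obtain ⟨t, htk, htne⟩ := this
      refine ⟨a + t, ?_, by omega, by omega⟩
      simp only [hSdef, Finset.mem_filter, Finset.mem_Icc]
      rw [mul_one] at htne
      exact ⟨⟨by omega, by omega⟩, htne⟩
    -- S has at most r - 1 elements
    have hpair : ∀ x y, x ∈ S → y ∈ S → x < y → χ x ≠ χ y := by
      intro x y hx hy hlt heq
      simp only [hSdef, Finset.mem_filter, Finset.mem_Icc] at hx hy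
      have hix : χ x < r := hχ x hx.1.1 hx.1.2
      have htci : twoColors k (χ x) = 2 := if_neg hx.2
      have := hno (χ x) hix x hx.1.1 (y - x) (by omega)
        (by rw [htci]; omega)
      rw [htci] at this
      obtain ⟨t, ht2, htne⟩ := this
      interval_cases t
      · simp at htne
      · rw [one_mul] at htne
        have hxy : x + (y - x) = y := by omega
        rw [hxy] at htne
        exact htne heq.symm
    have hScard : S.card ≤ r - 1 := by
      have h := Finset.card_le_card_of_injOn χ
        (s := S) (t := Finset.Ico 1 r)
        (fun x hx => by
          simp only [Finset.mem_coe, hSdef, Finset.mem_filter, Finset.mem_Icc] at hx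
          simp only [Finset.mem_coe, Finset.mem_Ico]
          exact ⟨Nat.one_le_iff_ne_zero.mpr hx.2, hχ x hx.1.1 hx.1.2⟩)
        (by
          intro x hx y hy hxy
          by_contra hne
          rcases Nat.lt_or_ge x y with h | h
          · exact hpair x y (Finset.mem_coe.mp hx) (Finset.mem_coe.mp hy) h hxy
          · exact hpair y x (Finset.mem_coe.mp hy) (Finset.mem_coe.mp hx) (by omega) hxy.symm)
      simpa using h
    -- a blocker congruent to 1 mod r
    have htc0 : twoColors k 0 = k := rfl
    have hb0 := hno 0 (by omega) 1 le_rfl r (by omega)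
      (by rw [htc0]
          have : (k - 1) * r = r * (k - 1) := Nat.mul_comm _ _
          omega)
    rw [htc0] at hb0
    obtain ⟨t, htk, hbne⟩ := hb0
    set b := 1 + t * r with hbdef
    have hbN : b ≤ N := by
      have h1 : t * r ≤ (k - 1) * r := Nat.mul_le_mul_right r (by omega)
      have h2 : (k - 1) * r = r * (k - 1) := Nat.mul_comm _ _
      omega
    have hbS : b ∈ S := by
      simp only [hSdef, Finset.mem_filter, Finset.mem_Icc]
      exact ⟨⟨by omega, hbN⟩, hbne⟩
    set S₁ := S.filter (fun x => x < b) with hS1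
    set S₂ := S.filter (fun x => b < x) with hS2
    have h1 := coverLemma k (by omega) (b - 1) S₁ 0
      (fun x hx => by
        simp only [hS1, hSdef, Finset.mem_filter, Finset.mem_Icc] at hx
        exact ⟨by omega, by omega⟩)
      (fun a ha hale => by
        obtain ⟨s, hsS, hsa, hsb⟩ := hwin a (by omega) (by omega)
        exact ⟨s, Finset.mem_filter.mpr ⟨hsS, by omega⟩, hsa, hsb⟩)
    have h2 := coverLemma k (by omega) (N - b) S₂ b
      (fun x hx => by
        simp only [hS2, hSdef, Finset.mem_filter, Finset.mem_Icc] at hx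
        exact ⟨hx.2, by omega⟩)
      (fun a ha hale => by
        obtain ⟨s, hsS, hsa, hsb⟩ := hwin a (by omega) (by omega)
        exact ⟨s, Finset.mem_filter.mpr ⟨hsS, by omega⟩, hsa, hsb⟩)
    -- cardinality accounting
    have hdisj : Disjoint S₁ S₂ := by
      rw [Finset.disjoint_left]
      intro x hx hx2
      simp only [hS1, Finset.mem_filter] at hx
      simp only [hS2, Finset.mem_filter] at hx2
      omega
    have hbnot : b ∉ S₁ ∪ S₂ := by
      simp only [Finset.mem_union, hS1, hS2, Finset.mem_filter]
      omega
    have hsubS : insert b (S₁ ∪ S₂) ⊆ S := by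
      intro x hx
      simp only [Finset.mem_insert, Finset.mem_union, hS1, hS2, Finset.mem_filter] at hx
      rcases hx with h | h | h
      · exact h ▸ hbS
      · exact h.1
      · exact h.1
    have hcards : S₁.card + S₂.card + 1 ≤ S.card := by
      have := Finset.card_le_card hsubS
      rw [Finset.card_insert_of_notMem hbnot, Finset.card_union_of_disjoint hdisj] at this
      omega
    -- final arithmetic
    set s2 := k - 1 - t with hs2def
    have hts : t + s2 + 1 = k := by omega
    have hb1 : b - 1 = t * r := by omega
    have hNb : N - b = s2 * r := by
      have e : r * k = r * t + r * s2 + r := by rw [← hts]; ring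
      have e2 : t * r = r * t := Nat.mul_comm _ _
      have e3 : s2 * r = r * s2 := Nat.mul_comm _ _
      omega
    have ht1 : t < S₁.card * c + c := by
      have h1' : t * r < (S₁.card * c + c) * r := by
        have e : (S₁.card * c + c) * r = S₁.card * (r * c) + r * c := by ring
        rw [e, ← hc]
        omega
      exact Nat.lt_of_mul_lt_mul_right h1'
    have ht2 : s2 < S₂.card * c + c := by
      have h2' : s2 * r < (S₂.card * c + c) * r := by
        have e : (S₂.card * c + c) * r = S₂.card * (r * c) + r * c := by ring
        rw [e, ← hc]
        omega
      exact Nat.lt_of_mul_lt_mul_right h2'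
    -- t + s2 + 2 ≤ (S₁.card + S₂.card) * c + 2c ≤ (r-2)*c + 2c = r*c = k, but t+s2+2 = k+1
    have hm : S₁.card + S₂.card ≤ r - 2 := by omega
    have hfin : (S₁.card + S₂.card) * c + 2 * c ≤ r * c := by
      have : (S₁.card + S₂.card) * c + 2 * c = (S₁.card + S₂.card + 2) * c := by ring
      rw [this]
      exact Nat.mul_le_mul_right c (by omega)
    have hexp : (S₁.card + S₂.card) * c = S₁.card * c + S₂.card * c := by ring
    omega
  · -- lower bound
    intro m hm
    obtain ⟨hm0, hvdw⟩ := hm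
    by_contra hlt
    push_neg at hlt
    have hmle : m ≤ r * (k - 1) := by omega
    have hcol := hvdw (fun x => if x % k = 0 then x / k else 0)
      (by
        intro x hx1 hx2
        show (if x % k = 0 then x / k else 0) < r
        by_cases h : x % k = 0
        · rw [if_pos h, Nat.div_lt_iff_lt_mul (by omega)]
          omega
        · rw [if_neg h]
          omega)
    obtain ⟨i, hir, a, ha, d, hd, hle, hAP⟩ := hcol
    by_cases hi0 : i = 0
    · subst hi0
      have htc0 : twoColors k 0 = k := rfl
      rw [htc0] at hle hAP
      have hdr : d < r := by
        by_contra hge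
        push_neg at hge
        have : r * (k - 1) ≤ (k - 1) * d := by
          rw [Nat.mul_comm]
          exact Nat.mul_le_mul_left _ hge
        omega
      obtain ⟨t, htk, hdvd⟩ := hhit a d ha hd hdr
      have hmod : (a + t * d) % k = 0 := Nat.mod_eq_zero_of_dvd hdvd
      have hval : (if (a + t * d) % k = 0 then (a + t * d) / k else 0) = 0 := hAP t htk
      rw [if_pos hmod] at hval
      have hge : k ≤ a + t * d := Nat.le_of_dvd (by omega) hdvd
      have : 1 ≤ (a + t * d) / k := (Nat.one_le_div_iff (by omega)).mpr hge
      omega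
    · have htci : twoColors k i = 2 := if_neg hi0
      rw [htci] at hle hAP
      have h0 : (if (a + 0 * d) % k = 0 then (a + 0 * d) / k else 0) = i := hAP 0 (by omega)
      have h1 : (if (a + 1 * d) % k = 0 then (a + 1 * d) / k else 0) = i := hAP 1 (by omega)
      rw [Nat.zero_mul, Nat.add_zero] at h0
      rw [Nat.one_mul] at h1
      -- χ a = i ≠ 0 forces a % k = 0 and a / k = i; same for a + d
      by_cases hma : a % k = 0
      · rw [if_pos hma] at h0
        by_cases hmad : (a + d) % k = 0
        · rw [if_pos hmad] at h1
          have ea : k * (a / k) = a := Nat.mul_div_cancel' (Nat.dvd_of_mod_eq_zero hma)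
          have eb : k * ((a + d) / k) = a + d := Nat.mul_div_cancel' (Nat.dvd_of_mod_eq_zero hmad)
          rw [h0] at ea
          rw [h1] at eb
          omega
        · rw [if_neg hmad] at h1
          exact hi0 h1.symm
      · rw [if_neg hma] at h0
        exact hi0 h0.symm
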